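/- arXiv:1805.02736 — 2 statements merged into one kernel-verified Lean document; each statement's English description precedes it below -/
import Mathlib

section
/- Let a be a self-adjoint element of a unital C*-algebra A and let f : ℝ → ℂ be a Schwartz function. Then the continuous functional calculus f(a) equals the Bochner integral (2π)^{−1/2} ∫_ℝ f̂(t) e^{ita} dt, where f̂(t) = (2π)^{−1/2} ∫_ℝ f(x) e^{−itx} dx is the Fourier transform of f. -/
open MeasureTheory


open FourierTransform Real Complex


-- inner auxiliary: the nonstandard Fourier transform in terms of mathlib's 𝓕
lemma aux_g_eq (f : SchwartzMap ℝ ℂ) (t : ℝ) :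
    (∫ y : ℝ, f y * Complex.exp (-(Complex.I * t * y))) = 𝓕 (⇑f) (t / (2 * π)) := by
  rw [Real.fourier_real_eq_integral_exp_smul]
  refine integral_congr_ae (Filter.Eventually.of_forall fun y => ?_)
  simp only [smul_eq_mul]
  rw [mul_comm]
  congr 1
  have hπ : (2 * π) ≠ 0 := by positivity
  have hr : (-2 * π * y * (t / (2 * π)) : ℝ) = -(t * y) := by field_simp
  rw [hr]
  push_cast
  ring

lemma aux_inversion (f : SchwartzMap ℝ ℂ) (x : ℝ) :
    ((Real.sqrt (2 * π) : ℂ))⁻¹ *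
      ∫ t : ℝ, (((Real.sqrt (2 * π) : ℂ))⁻¹ *
          ∫ y : ℝ, f y * Complex.exp (-(Complex.I * t * y))) * Complex.exp (Complex.I * t * x)
      = f x := by
  have hπ : (0:ℝ) < 2 * π := by positivity
  have h1 : ∀ t : ℝ, (((Real.sqrt (2 * π) : ℂ))⁻¹ *
          ∫ y : ℝ, f y * Complex.exp (-(Complex.I * t * y))) * Complex.exp (Complex.I * t * x)
        = ((Real.sqrt (2 * π) : ℂ))⁻¹ * (𝓕 (⇑f) (t / (2 * π)) * Complex.exp (Complex.I * t * x)) := by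
    intro t
    rw [aux_g_eq, mul_assoc]
  simp_rw [h1, integral_const_mul]
  set H : ℝ → ℂ := fun t => 𝓕 (⇑f) (t / (2 * π)) * Complex.exp (Complex.I * t * x) with hH
  have h2 : (∫ ξ : ℝ, H (2 * π * ξ)) = |(2 * π)⁻¹| • ∫ t, H t :=
    MeasureTheory.Measure.integral_comp_mul_left H (2 * π)
  have h3 : (∫ ξ : ℝ, H (2 * π * ξ)) = f x := by
    have hinv : 𝓕⁻ (𝓕 (⇑f)) x = f x := by
      rw [Continuous.fourierInv_fourier_eq f.continuous f.integrable
        (SchwartzMap.fourierTransformCLM ℂ f).integrable]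
    rw [← hinv, Real.fourierInv_eq_fourier_neg,
      Real.fourier_real_eq_integral_exp_smul]
    refine integral_congr_ae (Filter.Eventually.of_forall fun ξ => ?_)
    have hξ : 2 * π * ξ / (2 * π) = ξ := by field_simp
    simp only [hH, smul_eq_mul, hξ]
    rw [mul_comm]
    congr 2
    push_cast
    ring
  have h4 : (∫ t, H t) = (2 * π : ℝ) • f x := by
    rw [← h3, h2, smul_smul, abs_of_pos (by positivity), mul_inv_cancel₀ hπ.ne', one_smul]
  rw [h4]
  rw [real_smul]
  have hc : ((Real.sqrt (2 * π) : ℂ)) * ((Real.sqrt (2 * π) : ℂ)) = ((2 * π : ℝ) : ℂ) := by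
    rw [← Complex.ofReal_mul, Real.mul_self_sqrt hπ.le]
  have hcne : ((Real.sqrt (2 * π) : ℂ)) ≠ 0 := by
    simp only [ne_eq, Complex.ofReal_eq_zero]
    positivity
  have h5 : ((Real.sqrt (2 * π) : ℂ))⁻¹ * (((Real.sqrt (2 * π) : ℂ))⁻¹ * (((2 * π : ℝ) : ℂ) * f x))
      = (((Real.sqrt (2 * π) : ℂ)) * ((Real.sqrt (2 * π) : ℂ)))⁻¹ * ((2 * π : ℝ) : ℂ) * f x := by
    rw [mul_inv]; ring
  rw [h5, hc, inv_mul_cancel₀ (Complex.ofReal_ne_zero.mpr hπ.ne'), one_mul]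


/-- Let `a` be a self-adjoint element of a unital C*-algebra `A` and let `f : ℝ → ℂ` be a
Schwartz function.  Then the continuous functional calculus `f(a)` equals the Bochner integral
`(2π)^{−1/2} ∫_ℝ f̂(t) e^{ita} dt`, where `f̂(t) = (2π)^{−1/2} ∫_ℝ f(x) e^{−itx} dx` is the
Fourier transform of `f`. -/
theorem cfc_eq_fourier_integral_exp {A : Type*} [CStarAlgebra A]
    (a : A) (ha : IsSelfAdjoint a) (f : SchwartzMap ℝ ℂ) :
    cfc (fun z : ℂ => f z.re) a =
      ((Real.sqrt (2 * Real.pi) : ℂ))⁻¹ •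
        ∫ t : ℝ,
          (((Real.sqrt (2 * Real.pi) : ℂ))⁻¹ *
              ∫ x : ℝ, f x * Complex.exp (-(Complex.I * t * x))) •
            NormedSpace.exp (((t : ℂ) * Complex.I) • a) := by
  have hn : IsStarNormal a := ha.isStarNormal
  set c : ℂ := ((Real.sqrt (2 * Real.pi) : ℂ)) with hc
  let u : C(ℝ × spectrum ℂ a, ℂ) :=
    ⟨fun p => Complex.exp (Complex.I * p.1 * p.2), by fun_prop⟩
  let U : C(ℝ, C(spectrum ℂ a, ℂ)) := u.curry
  let g : ℝ → ℂ := fun t => c⁻¹ * ∫ x : ℝ, f x * Complex.exp (-(Complex.I * t * x))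
  have hπ : (2 * Real.pi) ≠ 0 := by positivity
  have hg_eq : g = fun t => c⁻¹ * (𝓕 (⇑f) (t / (2 * Real.pi))) := by
    funext t
    show c⁻¹ * _ = _
    rw [aux_g_eq]
  have h𝓕 : Integrable (𝓕 (⇑f)) volume :=
    (SchwartzMap.fourierTransformCLM ℂ f).integrable
  have hg_int : Integrable g := by
    rw [hg_eq]
    exact (h𝓕.comp_div hπ).const_mul _
  have hg_cont : Continuous g := by
    rw [hg_eq]
    exact continuous_const.mul
      ((SchwartzMap.fourierTransformCLM ℂ f).continuous.comp (continuous_id.div_const _))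
  have hUnorm : ∀ t : ℝ, ‖U t‖ ≤ 1 := by
    intro t
    refine (ContinuousMap.norm_le _ zero_le_one).mpr fun z => ?_
    obtain ⟨x, hx⟩ : ∃ x : ℝ, (z : ℂ) = x := ⟨(z : ℂ).re, ha.mem_spectrum_eq_re z.2⟩
    show ‖Complex.exp (Complex.I * t * (z : ℂ))‖ ≤ 1
    rw [show Complex.I * t * (z : ℂ) = ((t * x : ℝ) : ℂ) * Complex.I by
      rw [hx]; push_cast; ring]
    rw [Complex.norm_exp_ofReal_mul_I]
  have hF_int : Integrable (fun t => g t • U t) := by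
    refine Integrable.mono' hg_int.norm
      ((hg_cont.smul U.continuous).aestronglyMeasurable)
      (Filter.Eventually.of_forall fun t => ?_)
    rw [norm_smul (g t) (U t)]
    calc ‖g t‖ * ‖U t‖ ≤ ‖g t‖ * 1 := by
          exact mul_le_mul_of_nonneg_left (hUnorm t) (norm_nonneg _)
      _ = ‖g t‖ := mul_one _
  let L : C(spectrum ℂ a, ℂ) →L[ℂ] A :=
    { toFun := cfcHom hn (R := ℂ)
      map_add' := map_add _
      map_smul' := map_smul _
      cont := (cfcHom_isClosedEmbedding (R := ℂ) hn).continuous }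
  have hLt : ∀ t : ℝ, L (g t • U t) = g t • NormedSpace.exp (((t : ℂ) * Complex.I) • a) := by
    intro t
    rw [L.map_smul]
    congr 1
    have hcont : ContinuousOn (fun z : ℂ => Complex.exp (Complex.I * t * z)) (spectrum ℂ a) :=
      (Complex.continuous_exp.comp (by fun_prop)).continuousOn
    have h1 : cfc (fun z : ℂ => Complex.exp (Complex.I * t * z)) a = L (U t) := by
      rw [cfc_apply (fun z : ℂ => Complex.exp (Complex.I * t * z)) a hn hcont]
      rfl
    have hsa2 : IsStarNormal (((t : ℂ) * Complex.I) • a) := by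
      constructor
      rw [star_smul, ha.star_eq]
      show _ = _
      rw [smul_mul_smul_comm, smul_mul_smul_comm, mul_comm]
    have h2 : cfc (fun z : ℂ => Complex.exp (Complex.I * t * z)) a
        = NormedSpace.exp (((t : ℂ) * Complex.I) • a) := by
      have hfun : (fun z : ℂ => Complex.exp (Complex.I * t * z))
          = (fun z => Complex.exp (((t : ℂ) * Complex.I) * z)) := by funext z; ring_nf
      rw [hfun, cfc_comp_const_mul ((t : ℂ) * Complex.I) Complex.exp a
        (Complex.continuous_exp.continuousOn) hn, Complex.exp_eq_exp_ℂ]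
      exact CFC.exp_eq_normedSpace_exp hsa2
    rw [← h1, h2]
  have hcont2 : ContinuousOn (fun z : ℂ => f z.re) (spectrum ℂ a) :=
    (f.continuous.comp Complex.continuous_re).continuousOn
  have hmain : (⟨(spectrum ℂ a).restrict (fun z : ℂ => f z.re), hcont2.restrict⟩
        : C(spectrum ℂ a, ℂ)) = c⁻¹ • ∫ t, g t • U t := by
    ext z
    have hz : (z : ℂ) = ((z : ℂ).re : ℂ) := ha.mem_spectrum_eq_re z.2
    rw [ContinuousMap.smul_apply, ContinuousMap.integral_apply hF_int z]
    show f (z : ℂ).re = c⁻¹ • ∫ t, (g t • U t) z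
    rw [smul_eq_mul, ← aux_inversion f (z : ℂ).re]
    congr 1
    refine integral_congr_ae (Filter.Eventually.of_forall fun t => ?_)
    show (c⁻¹ * ∫ y : ℝ, f y * Complex.exp (-(Complex.I * t * y)))
        * Complex.exp (Complex.I * t * ((z : ℂ).re : ℂ)) = (g t • U t) z
    rw [ContinuousMap.smul_apply, smul_eq_mul]
    congr 1
    show _ = Complex.exp (Complex.I * t * (z : ℂ))
    rw [← hz]
  have hstep : cfc (fun z : ℂ => f z.re) a = L (c⁻¹ • ∫ t, g t • U t) := by
    rw [cfc_apply (fun z : ℂ => f z.re) a hn hcont2]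
    exact congrArg _ hmain
  rw [hstep, L.map_smul, ← ContinuousLinearMap.integral_comp_comm L hF_int]
  congr 1
  exact integral_congr_ae (Filter.Eventually.of_forall fun t => hLt t)
end

section
/- Let a be a self-adjoint element of a unital C*-algebra A. Then for every λ ∈ ℝ the element (1 + λ²)·1 + a² is invertible with ‖a·((1 + λ²)·1 + a²)^{−1}‖ ≤ 1/(2√(1 + λ²)), the Bochner integral (2/π) ∫₀^∞ a·((1 + λ²)·1 + a²)^{−1} dλ converges absolutely in norm, and it equals χ(a), the continuous functional calculus of a applied to the normalizing function χ(x) = x/√(1 + x²). -/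
open MeasureTheory Set

open Real in
lemma scalar_integral (x : ℝ) :
    ∫ lam in Ioi (0:ℝ), x / (1 + lam ^ 2 + x ^ 2) =
      (π / 2) * (x / Real.sqrt (1 + x ^ 2)) := by
  set c : ℝ := Real.sqrt (1 + x ^ 2) with hc
  have hcpos : 0 < c := Real.sqrt_pos.mpr (by positivity)
  have hc2 : c ^ 2 = 1 + x ^ 2 := Real.sq_sqrt (by positivity)
  have heq : ∀ lam : ℝ, x / (1 + lam ^ 2 + x ^ 2)
      = (x / c ^ 2) * (1 + (lam * c⁻¹) ^ 2)⁻¹ := by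
    intro lam
    field_simp
    rw [hc2]; ring
  rw [MeasureTheory.integral_congr_ae (Filter.Eventually.of_forall fun lam => heq lam)]
  rw [MeasureTheory.integral_comp_mul_right_Ioi
    (fun u => (x / c ^ 2) * (1 + u ^ 2)⁻¹) 0 (inv_pos.mpr hcpos)]
  rw [integral_const_mul, integral_Ioi_inv_one_add_sq]
  simp only [zero_mul, Real.arctan_zero, sub_zero, inv_inv, smul_eq_mul]
  rw [hc2]
  have hss : Real.sqrt (1+x^2) * Real.sqrt (1+x^2) = 1+x^2 := Real.mul_self_sqrt (by positivity)
  rw [hc] at *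
  field_simp
  linear_combination (2 * x * Real.pi) * hss + (x - 2 * x * Real.pi) * hc2

/-- Let `a` be a self-adjoint element of a unital C*-algebra `A`.  Then for every `λ ∈ ℝ` the
element `(1 + λ²)·1 + a²` is invertible with `‖a·((1 + λ²)·1 + a²)⁻¹‖ ≤ 1/(2√(1 + λ²))`, the
Bochner integral `(2/π) ∫₀^∞ a·((1 + λ²)·1 + a²)⁻¹ dλ` converges absolutely in norm, and it
equals `χ(a)`, the continuous functional calculus of `a` applied to the normalizing function
`χ(x) = x/√(1 + x²)`. -/
theorem cfc_normalizing_function_integral_formula {A : Type*} [CStarAlgebra A]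
    (a : A) (ha : IsSelfAdjoint a) :
    (∀ lam : ℝ, IsUnit ((1 + lam ^ 2) • (1 : A) + a ^ 2)) ∧
    (∀ lam : ℝ, ‖a * Ring.inverse ((1 + lam ^ 2) • (1 : A) + a ^ 2)‖ ≤
      1 / (2 * Real.sqrt (1 + lam ^ 2))) ∧
    IntegrableOn (fun lam : ℝ => a * Ring.inverse ((1 + lam ^ 2) • (1 : A) + a ^ 2))
      (Ioi 0) ∧
    cfc (fun x : ℝ => x / Real.sqrt (1 + x ^ 2)) a =
      (2 / Real.pi) • ∫ lam in Ioi (0 : ℝ),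
        a * Ring.inverse ((1 + lam ^ 2) • (1 : A) + a ^ 2) := by
  have hden : ∀ lam x : ℝ, 0 < 1 + lam ^ 2 + x ^ 2 := fun lam x => by positivity
  -- the denominator as a cfc
  have h1 : ∀ lam : ℝ, cfc (fun x : ℝ => 1 + lam ^ 2 + x ^ 2) a
      = (1 + lam ^ 2) • (1 : A) + a ^ 2 := by
    intro lam
    rw [cfc_add (a := a) (fun _ : ℝ => 1 + lam ^ 2) (fun x : ℝ => x ^ 2)
      (by fun_prop) (by fun_prop), cfc_const _ a ha,
      cfc_pow_id (R := ℝ) a 2 ha, Algebra.algebraMap_eq_smul_one]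
  have hunit : ∀ lam : ℝ, IsUnit ((1 + lam ^ 2) • (1 : A) + a ^ 2) := by
    intro lam
    rw [← h1 lam]
    exact (isUnit_cfc_iff _ a (by fun_prop) ha).mpr fun x _ => (hden lam x).ne'
  -- key identity
  have key : ∀ lam : ℝ, a * Ring.inverse ((1 + lam ^ 2) • (1 : A) + a ^ 2)
      = cfc (fun x : ℝ => x / (1 + lam ^ 2 + x ^ 2)) a := by
    intro lam
    rw [← h1 lam]
    nth_rewrite 1 [← cfc_id ℝ a ha]
    exact (cfc_map_div id _ a (fun x _ => (hden lam x).ne') (by fun_prop) (by fun_prop) ha).symm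
  -- norm bound
  have hnorm : ∀ lam : ℝ, ‖a * Ring.inverse ((1 + lam ^ 2) • (1 : A) + a ^ 2)‖ ≤
      1 / (2 * Real.sqrt (1 + lam ^ 2)) := by
    intro lam
    rw [key lam]
    have hcpos : 0 < Real.sqrt (1 + lam ^ 2) := Real.sqrt_pos.mpr (by positivity)
    refine norm_cfc_le (by positivity) fun x _ => ?_
    have hss : Real.sqrt (1 + lam ^ 2) * Real.sqrt (1 + lam ^ 2) = 1 + lam ^ 2 :=
      Real.mul_self_sqrt (by positivity)
    rw [Real.norm_eq_abs, abs_div, abs_of_pos (hden lam x),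
      div_le_div_iff₀ (hden lam x) (by positivity)]
    nlinarith [sq_nonneg (Real.sqrt (1 + lam ^ 2) - |x|), sq_abs x]
  -- bound by an integrable function
  have hbd : ∀ lam : ℝ, ∀ x ∈ spectrum ℝ a,
      ‖x / (1 + lam ^ 2 + x ^ 2)‖ ≤ ‖a‖ * (1 + lam ^ 2)⁻¹ := by
    intro lam x hx
    rcases subsingleton_or_nontrivial A with hA | hA
    · exact absurd hx (by simp [spectrum.mem_iff, isUnit_of_subsingleton])
    have hxa : |x| ≤ ‖a‖ := by
      simpa using spectrum.norm_le_norm_of_mem hx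
    rw [Real.norm_eq_abs, abs_div, abs_of_pos (hden lam x),
      div_le_iff₀ (hden lam x)]
    have h1lam : (0:ℝ) < 1 + lam ^ 2 := by positivity
    calc |x| ≤ ‖a‖ := hxa
      _ ≤ ‖a‖ * (1 + lam ^ 2)⁻¹ * (1 + lam ^ 2) := by
          rw [mul_assoc, inv_mul_cancel₀ h1lam.ne', mul_one]
      _ ≤ ‖a‖ * (1 + lam ^ 2)⁻¹ * (1 + lam ^ 2 + x ^ 2) := by
          have : (0:ℝ) ≤ ‖a‖ * (1 + lam ^ 2)⁻¹ := by positivity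
          nlinarith [sq_nonneg x]
  -- continuity of the integrand
  have hcont : Continuous (fun lam : ℝ =>
      a * Ring.inverse ((1 + lam ^ 2) • (1 : A) + a ^ 2)) := by
    refine continuous_const.mul ?_
    have hc : Continuous fun lam : ℝ => (1 + lam ^ 2) • (1 : A) + a ^ 2 := by
      exact ((continuous_const.add (continuous_pow 2)).smul continuous_const).add
        continuous_const
    refine continuous_iff_continuousAt.mpr fun lam => ?_
    have h2 : ContinuousAt Ring.inverse ((1 + lam ^ 2) • (1 : A) + a ^ 2) := by
      have := NormedRing.inverse_continuousAt (hunit lam).unit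
      rwa [IsUnit.unit_spec] at this
    exact ContinuousAt.comp (f := fun lam : ℝ => (1 + lam ^ 2) • (1 : A) + a ^ 2) h2 hc.continuousAt
  -- integrability
  have hInt : IntegrableOn
      (fun lam : ℝ => a * Ring.inverse ((1 + lam ^ 2) • (1 : A) + a ^ 2)) (Ioi 0) := by
    have hgInt : IntegrableOn (fun lam : ℝ => ‖a‖ * (1 + lam ^ 2)⁻¹) (Ioi 0) :=
      (integrable_inv_one_add_sq.integrableOn).const_mul _
    refine Integrable.mono' hgInt (hcont.aestronglyMeasurable.restrict) ?_
    refine Filter.Eventually.of_forall fun lam => ?_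
    rw [key lam]
    refine norm_cfc_le (by positivity) fun x hx => hbd lam x hx
  refine ⟨hunit, hnorm, hInt, ?_⟩
  -- the integral identity
  have hswap : cfc (fun x : ℝ =>
        ∫ lam in Ioi (0:ℝ), x / (1 + lam ^ 2 + x ^ 2)) a
      = ∫ lam in Ioi (0:ℝ), cfc (fun x : ℝ => x / (1 + lam ^ 2 + x ^ 2)) a := by
    refine cfc_integral (μ := volume.restrict (Ioi 0))
      (fun lam x => x / (1 + lam ^ 2 + x ^ 2))
      (fun lam => ‖a‖ * (1 + lam ^ 2)⁻¹) a ?_ ?_ ?_ ha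
    · refine Continuous.continuousOn ?_
      apply Continuous.div
      · exact continuous_snd
      · fun_prop
      · exact fun p => (hden p.1 p.2).ne'
    · refine Filter.Eventually.of_forall fun lam x hx => ?_
      exact hbd lam x hx
    · exact (integrable_inv_one_add_sq.integrableOn.const_mul ‖a‖).hasFiniteIntegral
  have hpi : Real.pi ≠ 0 := Real.pi_ne_zero
  have hfun : ∀ x : ℝ, x / Real.sqrt (1 + x ^ 2)
      = (2 / Real.pi) * ∫ lam in Ioi (0:ℝ), x / (1 + lam ^ 2 + x ^ 2) := by
    intro x
    rw [scalar_integral x]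
    field_simp
  calc cfc (fun x : ℝ => x / Real.sqrt (1 + x ^ 2)) a
      = cfc (fun x : ℝ =>
          (2 / Real.pi) * ∫ lam in Ioi (0:ℝ), x / (1 + lam ^ 2 + x ^ 2)) a :=
        cfc_congr fun x _ => hfun x
    _ = (2 / Real.pi) • cfc (fun x : ℝ =>
          ∫ lam in Ioi (0:ℝ), x / (1 + lam ^ 2 + x ^ 2)) a := by
        have hs : Continuous fun x : ℝ => Real.sqrt (1 + x ^ 2) :=
          Real.continuous_sqrt.comp (by fun_prop)
        have hcontInt : ContinuousOn
            (fun x : ℝ => ∫ lam in Ioi (0:ℝ), x / (1 + lam ^ 2 + x ^ 2))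
            (spectrum ℝ a) := by
          have heq2 : (fun x : ℝ => ∫ lam in Ioi (0:ℝ), x / (1 + lam ^ 2 + x ^ 2))
              = fun x : ℝ => (Real.pi / 2) * (x / Real.sqrt (1 + x ^ 2)) :=
            funext scalar_integral
          rw [heq2]
          exact (continuous_const.mul (continuous_id.div hs fun x =>
            (Real.sqrt_pos.mpr (by positivity)).ne')).continuousOn
        exact cfc_const_mul (2 / Real.pi) _ a hcontInt
    _ = (2 / Real.pi) • ∫ lam in Ioi (0:ℝ),
          a * Ring.inverse ((1 + lam ^ 2) • (1 : A) + a ^ 2) := by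
        rw [hswap]
        congr 1
        exact integral_congr_ae (Filter.Eventually.of_forall fun lam => (key lam).symm)
end
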